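/- Let (e_n) denote the canonical basis of ℓ∞ viewed as coordinate functionals on ℓ₁ (so e_n(x) = x_n for x ∈ ℓ₁). If (a_n) is a sequence of positive reals with ∑_{n=1}^∞ a_n^{-1} = ∞, then 0 is a σ(ℓ∞, ℓ₁)-cluster point of the sequence (a_n e_n) in ℓ∞. -/
import Mathlib


/-- If `∑ aₙ⁻¹ = ∞` then `0` is a `σ(ℓ∞, ℓ₁)`-cluster point of `(aₙ eₙ)`,
where `eₙ` are the coordinate functionals on `ℓ₁`. -/
theorem stmt_3 (a : ℕ → ℝ) (ha : ∀ n, 0 < a n)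
    (hdiv : ¬ Summable (fun n => (a n)⁻¹)) :
    ∀ (s : Finset (lp (fun _ : ℕ => ℝ) 1)) (ε : ℝ), 0 < ε → ∀ N : ℕ,
      ∃ m ≥ N, ∀ x ∈ s, |a m * x m| < ε := by
  intro s ε hε N
  by_contra h
  push_neg at h
  -- h : ∀ m ≥ N, ∃ x ∈ s, ε ≤ |a m * x m|
  set g : ℕ → ℝ := fun m => ∑ x ∈ s, |(x : lp (fun _ : ℕ => ℝ) 1) m| with hg
  have hgsum : Summable g := by
    apply summable_sum
    intro x hx
    have := (lp.memℓp x).summable (by norm_num : (0:ℝ) < (1 : ENNReal).toReal)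
    simpa using this
  have key : ∀ m, ε * (a (m + N))⁻¹ ≤ g (m + N) := by
    intro m
    obtain ⟨x, hxs, hxm⟩ := h (m + N) (Nat.le_add_left N m)
    have h1 : |(x : lp (fun _ : ℕ => ℝ) 1) (m + N)| ≤ g (m + N) :=
      Finset.single_le_sum (f := fun y => |(y : lp (fun _ : ℕ => ℝ) 1) (m + N)|) (fun y _ => abs_nonneg _) hxs
    have h2 : ε * (a (m + N))⁻¹ ≤ |(x : lp (fun _ : ℕ => ℝ) 1) (m + N)| := by
      rw [abs_mul, abs_of_pos (ha _)] at hxm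
      have := ha (m + N)
      rw [mul_inv_le_iff₀ this] at *
      nlinarith [abs_nonneg ((x : lp (fun _ : ℕ => ℝ) 1) (m + N))]
    linarith
  have hsum2 : Summable (fun m => ε * (a (m + N))⁻¹) := by
    apply Summable.of_nonneg_of_le (fun m => mul_nonneg hε.le (inv_nonneg.2 (ha _).le)) key
    exact (summable_nat_add_iff N).2 hgsum
  have : Summable (fun m => (a (m + N))⁻¹) := by
    have := hsum2.mul_left ε⁻¹
    simpa [← mul_assoc, inv_mul_cancel₀ hε.ne'] using this
  exact hdiv ((summable_nat_add_iff N).1 this)
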